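/- For k ≥ 2, every root r ∈ ℂ of the Fibonacci polynomial x^k − x^{k−1} − ⋯ − x − 1 other than the positive real root φ_k satisfies |r| < 1. -/

import Mathlib

open Polynomial Finset

/-- If `0 < a < b` and `a` is a positive root of `x^k = ∑ x^i`, then `b^k` exceeds the sum. -/
lemma sum_pow_lt_of_root (k : ℕ) (hk : 1 ≤ k) {a b : ℝ} (ha : 0 < a) (hab : a < b)
    (hA : a ^ k = ∑ i ∈ Finset.range k, a ^ i) :
    ∑ i ∈ Finset.range k, b ^ i < b ^ k := by
  have hb : 0 < b := ha.trans hab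
  have key : ∀ i ∈ Finset.range k, b ^ i * a ^ k < a ^ i * b ^ k := by
    intro i hi
    rw [Finset.mem_range] at hi
    obtain ⟨j, hj⟩ : ∃ j, k = i + j := ⟨k - i, by omega⟩
    have hpow : a ^ j < b ^ j := pow_lt_pow_left₀ hab ha.le (by omega)
    have hpos : (0 : ℝ) < b ^ i * a ^ i := by positivity
    calc b ^ i * a ^ k = (b ^ i * a ^ i) * a ^ j := by rw [hj, pow_add]; ring
      _ < (b ^ i * a ^ i) * b ^ j := (mul_lt_mul_iff_right₀ hpos).2 hpow
      _ = a ^ i * b ^ k := by rw [hj, pow_add]; ring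
  have hsum : ∑ i ∈ Finset.range k, b ^ i * a ^ k < ∑ i ∈ Finset.range k, a ^ i * b ^ k :=
    Finset.sum_lt_sum_of_nonempty (Finset.nonempty_range_iff.2 (by omega)) key
  rw [← Finset.sum_mul, ← Finset.sum_mul, ← hA] at hsum
  have hak : (0 : ℝ) < a ^ k := by positivity
  nlinarith [hsum]

/-- If `|r| = t` and `|2 - r| = 2 - t`, then `r = t`. -/
lemma eq_real_of_abs (r : ℂ) (t : ℝ) (habs : ‖r‖ = t)
    (h2 : ‖2 - r‖ = 2 - t) : r = (t : ℂ) := by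
  have e1 : Complex.normSq r = t ^ 2 := by rw [← Complex.sq_norm, habs]
  have e2 : Complex.normSq (2 - r) = (2 - t) ^ 2 := by rw [← Complex.sq_norm, h2]
  simp only [Complex.normSq_apply, Complex.sub_re, Complex.sub_im, Complex.re_ofNat,
    Complex.im_ofNat] at e1 e2
  have hre : r.re = t := by nlinarith [e1, e2]
  have him : r.im = 0 := by nlinarith [e1, e2, hre]
  apply Complex.ext <;> simp [hre, him]

theorem other_roots_lt_one (k : ℕ) (hk : 2 ≤ k) (φ : ℝ) (hφ : 0 < φ)
    (hroot : ((X : ℝ[X]) ^ k - ∑ i ∈ Finset.range k, X ^ i).eval φ = 0)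
    (r : ℂ) (hr : ((X : ℂ[X]) ^ k - ∑ i ∈ Finset.range k, X ^ i).eval r = 0)
    (hne : r ≠ (φ : ℂ)) :
    ‖r‖ < 1 := by
  by_contra hcon
  push_neg at hcon
  set t := ‖r‖ with ht
  have htpos : (0 : ℝ) < t := lt_of_lt_of_le one_pos hcon
  -- simplify the polynomial evaluations
  have hsum_r : r ^ k = ∑ i ∈ Finset.range k, r ^ i := by
    have h := hr
    simp only [eval_sub, eval_pow, eval_X, eval_finset_sum, sub_eq_zero] at h
    exact h
  have hsum_φ : φ ^ k = ∑ i ∈ Finset.range k, φ ^ i := by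
    have h := hroot
    simp only [eval_sub, eval_pow, eval_X, eval_finset_sum, sub_eq_zero] at h
    exact h
  -- key identity : r^k * (2 - r) = 1
  have key_r : r ^ k * (2 - r) = 1 := by
    have hg := geom_sum_mul r k
    linear_combination (1 - r) * hsum_r - hg
  -- |r|^k * |2 - r| = 1
  have habs : t ^ k * ‖2 - r‖ = 1 := by
    have h := congrArg (‖·‖) key_r
    simpa [norm_mul, norm_pow] using h
  -- triangle inequality : t^k ≤ ∑ t^i
  have hA : t ^ k ≤ ∑ i ∈ Finset.range k, t ^ i := by
    calc t ^ k = ‖r ^ k‖ := by rw [norm_pow]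
      _ = ‖∑ i ∈ Finset.range k, r ^ i‖ := by rw [hsum_r]
      _ ≤ ∑ i ∈ Finset.range k, ‖r ^ i‖ := norm_sum_le _ _
      _ = ∑ i ∈ Finset.range k, t ^ i := by simp [norm_pow, ht]
  -- reverse triangle inequality : 2 - t ≤ |2 - r|
  have h2t : (2 : ℝ) - t ≤ ‖2 - r‖ := by
    have h := norm_sub_norm_le (2 : ℂ) r
    simpa [ht] using h
  have htk : (0 : ℝ) < t ^ k := by positivity
  have hB : t ^ k * (2 - t) ≤ 1 := by
    calc t ^ k * (2 - t) ≤ t ^ k * ‖2 - r‖ :=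
          mul_le_mul_of_nonneg_left h2t htk.le
      _ = 1 := habs
  -- the real identity
  have hid : (t - 1) * (t ^ k - ∑ i ∈ Finset.range k, t ^ i)
      = t ^ k * t - 2 * t ^ k + 1 := by
    have hg := geom_sum_mul t k
    linear_combination -hg
  rcases eq_or_lt_of_le hcon with h1 | h1
  · -- case t = 1 : then |2 - r| = 1 = 2 - t, so r = 1 and k = 1, contradiction
    have ht1 : t = 1 := h1.symm
    have habs1 : ‖2 - r‖ = 2 - t := by
      rw [ht1] at habs ⊢
      norm_num
      simpa using habs
    have hr1 : r = (t : ℂ) := eq_real_of_abs r t rfl habs1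
    rw [hr1, ht1] at hsum_r
    simp at hsum_r
    have : ((1 : ℂ)) = (k : ℂ) := by simpa using hsum_r
    have : (1 : ℕ) = k := by exact_mod_cast this
    omega
  · -- case t > 1
    have hp0 : t ^ k - ∑ i ∈ Finset.range k, t ^ i = 0 := by
      nlinarith [hid, hA, hB, h1]
    have hpe : t ^ k = ∑ i ∈ Finset.range k, t ^ i := by linarith
    -- uniqueness of the positive root : t = φ
    have htφ : t = φ := by
      rcases lt_trichotomy t φ with h | h | h
      · exfalso
        have := sum_pow_lt_of_root k (by omega) htpos h hpe
        linarith [hsum_φ, this]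
      · exact h
      · exfalso
        have := sum_pow_lt_of_root k (by omega) hφ h hsum_φ
        linarith [hpe, this]
    -- t^k * (2 - t) = 1
    have hfe : t ^ k * (2 - t) = 1 := by nlinarith [hid, hp0]
    have habs2 : ‖2 - r‖ = 2 - t := by
      have := habs
      rw [← hfe] at this
      exact mul_left_cancel₀ (ne_of_gt htk) this
    have hr1 : r = (t : ℂ) := eq_real_of_abs r t rfl habs2
    rw [htφ] at hr1
    exact hne hr1
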